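/- arXiv:2602.23565 — 2 statements merged into one kernel-verified Lean document; each statement's English description precedes it below -/
import Mathlib

section
/- Fix R > 0 and α ∈ (0,1]. For θ = (θ₁,…,θ_C) ∈ (ℝ^d)^C and x ∈ ℝ^d with ‖x‖ ≤ R define the softmax output h_θ(x)_c = exp(⟨x, θ_c⟩)/Σ_{j=1}^C exp(⟨x, θ_j⟩). Suppose θ, θ′ ∈ (ℝ^d)^C are such that along the segment joining them every softmax coordinate satisfies h_·(x)_c ≥ α. Then Σ_{c=1}^C |h_θ(x)_c − h_{θ′}(x)_c| ≤ R·√(2(1−α))·‖θ − θ′‖. -/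
open scoped RealInnerProductSpace

private lemma softmax_div_identity (u v s bc ec : ℝ) (hs : s ≠ 0) :
    ec * ((u * bc * s - u * v) / s ^ 2) = ec * (bc * (u / s) - u / s * (v / s)) := by
  field_simp

private lemma softmax_key {n : ℕ} (p b e : Fin n → ℝ)
    (hp0 : ∀ c, 0 < p c) (hp1 : ∑ c, p c = 1)
    (he : ∀ c, e c = 1 ∨ e c = -1) :
    |∑ c, e c * (b c * p c - p c * ∑ j, p j * b j)| ≤ Real.sqrt (∑ c, b c ^ 2) := by
  set E := ∑ c, e c * p c with hE
  set T := ∑ j, p j * b j with hT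
  have hsq : ∀ c, e c ^ 2 = 1 := fun c => by rcases he c with h | h <;> rw [h] <;> norm_num
  have hrw : ∑ c, e c * (b c * p c - p c * T) = ∑ c, (p c * (e c - E)) * b c := by
    have h1 : ∑ c, e c * (b c * p c - p c * T)
        = (∑ c, e c * p c * b c) - (∑ c, e c * p c) * T := by
      rw [Finset.sum_mul, ← Finset.sum_sub_distrib]
      exact Finset.sum_congr rfl fun c _ => by ring
    have h2 : ∑ c, (p c * (e c - E)) * b c
        = (∑ c, e c * p c * b c) - E * T := by
      rw [hT, Finset.mul_sum, ← Finset.sum_sub_distrib]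
      exact Finset.sum_congr rfl fun c _ => by ring
    rw [h1, h2, hE]
  have hple : ∀ c, p c ≤ 1 := by
    intro c
    rw [← hp1]
    exact Finset.single_le_sum (fun i _ => (hp0 i).le) (Finset.mem_univ c)
  have hA : ∑ c, (p c * (e c - E)) ^ 2 ≤ 1 := by
    have step1 : ∑ c, (p c * (e c - E)) ^ 2 ≤ ∑ c, p c * (e c - E) ^ 2 := by
      apply Finset.sum_le_sum
      intro c _
      have h1 : (p c * (e c - E)) ^ 2 = p c ^ 2 * (e c - E) ^ 2 := by ring
      rw [h1]
      have : p c ^ 2 ≤ p c := by nlinarith [(hp0 c).le, hple c]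
      exact mul_le_mul_of_nonneg_right this (sq_nonneg _)
    have step2 : ∑ c, p c * (e c - E) ^ 2 = 1 - E ^ 2 := by
      have hcongr : ∑ c, p c * (e c - E) ^ 2
          = ∑ c, (p c - 2 * E * (e c * p c) + E ^ 2 * p c) := by
        refine Finset.sum_congr rfl fun c _ => ?_
        have : p c * (e c - E) ^ 2
            = p c * e c ^ 2 - 2 * E * (e c * p c) + E ^ 2 * p c := by ring
        rw [this, hsq c, mul_one]
      rw [hcongr, Finset.sum_add_distrib, Finset.sum_sub_distrib,
        ← Finset.mul_sum, ← Finset.mul_sum, hp1, ← hE]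
      ring
    nlinarith [sq_nonneg E]
  have hBnn : (0:ℝ) ≤ ∑ c, b c ^ 2 := Finset.sum_nonneg fun c _ => sq_nonneg _
  have hcs : (∑ c, (p c * (e c - E)) * b c) ^ 2
      ≤ (∑ c, (p c * (e c - E)) ^ 2) * ∑ c, b c ^ 2 :=
    Finset.sum_mul_sq_le_sq_mul_sq _ _ _
  rw [hrw, ← Real.sqrt_sq_eq_abs]
  apply Real.sqrt_le_sqrt
  nlinarith

private lemma softmax_scalar {n : ℕ} (hn : 0 < n) (a b e : Fin n → ℝ)
    (he : ∀ c, e c = 1 ∨ e c = -1) :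
    |(∑ c, e c * (Real.exp (a c + b c) / ∑ j, Real.exp (a j + b j)))
      - ∑ c, e c * (Real.exp (a c) / ∑ j, Real.exp (a j))|
      ≤ Real.sqrt (∑ c, b c ^ 2) := by
  have : Nonempty (Fin n) := Fin.pos_iff_nonempty.mp hn
  set S : ℝ → ℝ := fun t => ∑ j, Real.exp (a j + t * b j) with hSdef
  have hS : ∀ t, 0 < S t := fun t =>
    Finset.sum_pos (fun j _ => Real.exp_pos _) Finset.univ_nonempty
  set φ : ℝ → ℝ := fun t => ∑ c, e c * (Real.exp (a c + t * b c) / S t) with hφdef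
  set D : ℝ → ℝ := fun t => ∑ c, e c *
      ((Real.exp (a c + t * b c) * b c * S t -
        Real.exp (a c + t * b c) * ∑ j, Real.exp (a j + t * b j) * b j) / S t ^ 2) with hDdef
  have hlin : ∀ (c : Fin n) (t : ℝ), HasDerivAt (fun s => a c + s * b c) (b c) t := by
    intro c t
    simpa using ((hasDerivAt_id t).mul_const (b c)).const_add (a c)
  have hSd : ∀ t, HasDerivAt S (∑ j, Real.exp (a j + t * b j) * b j) t := by
    intro t
    exact HasDerivAt.fun_sum fun j _ => (hlin j t).exp
  have hder : ∀ t, HasDerivAt φ (D t) t := by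
    intro t
    exact HasDerivAt.fun_sum fun c _ =>
      ((hlin c t).exp.div (hSd t) (hS t).ne').const_mul (e c)
  have hbound : ∀ t, |D t| ≤ Real.sqrt (∑ c, b c ^ 2) := by
    intro t
    set p : Fin n → ℝ := fun c => Real.exp (a c + t * b c) / S t with hpdef
    have hp0 : ∀ c, 0 < p c := fun c => div_pos (Real.exp_pos _) (hS t)
    have hp1 : ∑ c, p c = 1 := by
      simp only [hpdef]
      rw [← Finset.sum_div]
      exact div_self (hS t).ne'
    have hDrw : D t = ∑ c, e c * (b c * p c - p c * ∑ j, p j * b j) := by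
      simp only [hDdef]
      refine Finset.sum_congr rfl fun c _ => ?_
      have hSne := (hS t).ne'
      have hTj : ∑ j, p j * b j = (∑ j, Real.exp (a j + t * b j) * b j) / S t := by
        rw [Finset.sum_div]
        exact Finset.sum_congr rfl fun j _ => by simp only [hpdef]; ring
      rw [hTj]
      simp only [hpdef]
      exact softmax_div_identity _ _ _ _ _ hSne
    rw [hDrw]
    exact softmax_key p b e hp0 hp1 he
  have hmvt := norm_image_sub_le_of_norm_deriv_le_segment'
      (f := φ) (f' := D) (a := 0) (b := 1) (C := Real.sqrt (∑ c, b c ^ 2))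
      (fun t _ => (hder t).hasDerivWithinAt)
      (fun t _ => by rw [Real.norm_eq_abs]; exact hbound t)
      1 (by norm_num)
  rw [Real.norm_eq_abs] at hmvt
  have hφ1 : φ 1 = ∑ c, e c * (Real.exp (a c + b c) / ∑ j, Real.exp (a j + b j)) := by
    simp [hφdef, hSdef]
  have hφ0 : φ 0 = ∑ c, e c * (Real.exp (a c) / ∑ j, Real.exp (a j)) := by
    simp [hφdef, hSdef]
  rw [hφ1, hφ0] at hmvt
  simpa using hmvt

/-- Lipschitzness (in ℓ₁) of the softmax map with respect to the parameters,
given a probability floor `α` along the segment joining the two parameter points. -/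
theorem softmax_l1_lipschitz {d C : ℕ} (R α : ℝ) (hR : 0 < R)
    (hα : α ∈ Set.Ioc (0 : ℝ) 1)
    (x : EuclideanSpace ℝ (Fin d)) (hx : ‖x‖ ≤ R)
    (h : PiLp 2 (fun _ : Fin C => EuclideanSpace ℝ (Fin d)) → Fin C → ℝ)
    (hh : ∀ θ c, h θ c = Real.exp ⟪x, θ c⟫ / ∑ j, Real.exp ⟪x, θ j⟫)
    (θ θ' : PiLp 2 (fun _ : Fin C => EuclideanSpace ℝ (Fin d)))
    (hfloor : ∀ ξ ∈ segment ℝ θ θ', ∀ c, α ≤ h ξ c) :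
    ∑ c, |h θ c - h θ' c| ≤ R * Real.sqrt (2 * (1 - α)) * ‖θ - θ'‖ := by
  obtain ⟨hα0, hα1⟩ := hα
  have hRHS0 : 0 ≤ R * Real.sqrt (2 * (1 - α)) * ‖θ - θ'‖ := by positivity
  by_cases hC : C < 2
  · -- at most one class: softmax is constantly 1 on each (or empty)
    have hone : ∀ ψ (c : Fin C), h ψ c = 1 := by
      intro ψ c
      have hsub : (Finset.univ : Finset (Fin C)) = {c} := by
        refine Finset.eq_singleton_iff_unique_mem.mpr ⟨Finset.mem_univ c, fun y _ => ?_⟩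
        have h1 := y.isLt
        have h2 := c.isLt
        exact Fin.ext (by omega)
      rw [hh, hsub, Finset.sum_singleton, div_self (Real.exp_ne_zero _)]
    calc ∑ c, |h θ c - h θ' c| = 0 := by simp [hone]
      _ ≤ _ := hRHS0
  · push_neg at hC
    have hnonempty : Nonempty (Fin C) := Fin.pos_iff_nonempty.mp (by omega)
    -- from the floor at θ : 2 * α ≤ 1
    have hfl := hfloor θ (left_mem_segment ℝ θ θ')
    have hSpos : 0 < ∑ j, Real.exp ⟪x, θ j⟫ :=
      Finset.sum_pos (fun j _ => Real.exp_pos _) Finset.univ_nonempty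
    have hsum1 : ∑ c, h θ c = 1 := by
      simp only [hh]
      rw [← Finset.sum_div]
      exact div_self hSpos.ne'
    have hcard := Finset.card_nsmul_le_sum Finset.univ (h θ) α (fun c _ => hfl c)
    rw [Finset.card_univ, Fintype.card_fin, nsmul_eq_mul, hsum1] at hcard
    have hC2 : (2:ℝ) ≤ (C:ℝ) := by exact_mod_cast hC
    have h2α : 2 * α ≤ 1 := by nlinarith
    have hone' : (1:ℝ) ≤ Real.sqrt (2 * (1 - α)) := by
      calc (1:ℝ) = Real.sqrt 1 := Real.sqrt_one.symm
        _ ≤ _ := Real.sqrt_le_sqrt (by linarith)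
    -- set up the scalar problem
    set ε : Fin C → ℝ := fun c => if h θ' c ≤ h θ c then 1 else -1 with hεdef
    set aa : Fin C → ℝ := fun j => ⟪x, θ' j⟫ with haa
    set bb : Fin C → ℝ := fun j => ⟪x, θ j⟫ - ⟪x, θ' j⟫ with hbb
    have hεpm : ∀ c, ε c = 1 ∨ ε c = -1 := by
      intro c
      by_cases hc : h θ' c ≤ h θ c <;> simp [hεdef, hc]
    have hkey := softmax_scalar (by omega) aa bb ε hεpm
    have e1 : (∑ c, ε c * (Real.exp (aa c + bb c) / ∑ j, Real.exp (aa j + bb j)))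
        = ∑ c, ε c * h θ c := by
      have harg : ∀ j, aa j + bb j = ⟪x, θ j⟫ := fun j => by simp [haa, hbb]
      simp only [harg, hh]
    have e0 : (∑ c, ε c * (Real.exp (aa c) / ∑ j, Real.exp (aa j)))
        = ∑ c, ε c * h θ' c := by
      simp only [haa, hh]
    rw [e1, e0] at hkey
    have habs : ∑ c, |h θ c - h θ' c| = (∑ c, ε c * h θ c) - ∑ c, ε c * h θ' c := by
      rw [← Finset.sum_sub_distrib]
      refine Finset.sum_congr rfl fun c _ => ?_
      by_cases hc : h θ' c ≤ h θ c
      · rw [abs_of_nonneg (sub_nonneg.mpr hc)]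
        simp [hεdef, hc]
      · push_neg at hc
        rw [abs_of_neg (sub_neg.mpr hc)]
        simp [hεdef, not_le.mpr hc]
        ring
    -- bound √(∑ bb²) by ‖x‖ * ‖θ - θ'‖
    have hbsq : ∀ c, bb c ^ 2 ≤ ‖x‖ ^ 2 * ‖(θ - θ') c‖ ^ 2 := by
      intro c
      have hbc : bb c = ⟪x, (θ - θ') c⟫ := by
        simp [hbb, PiLp.sub_apply, inner_sub_right]
      rw [hbc]
      have h1 := abs_real_inner_le_norm x ((θ - θ') c)
      nlinarith [abs_nonneg (⟪x, (θ - θ') c⟫ : ℝ), sq_abs (⟪x, (θ - θ') c⟫ : ℝ),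
        norm_nonneg x, norm_nonneg ((θ - θ') c)]
    have hnorm : ‖θ - θ'‖ = Real.sqrt (∑ c, ‖(θ - θ') c‖ ^ 2) := PiLp.norm_eq_of_L2 _
    have hbb2 : Real.sqrt (∑ c, bb c ^ 2) ≤ ‖x‖ * ‖θ - θ'‖ := by
      have h1 : (∑ c, bb c ^ 2) ≤ ‖x‖ ^ 2 * ∑ c, ‖(θ - θ') c‖ ^ 2 := by
        rw [Finset.mul_sum]
        exact Finset.sum_le_sum fun c _ => hbsq c
      calc Real.sqrt (∑ c, bb c ^ 2)
          ≤ Real.sqrt (‖x‖ ^ 2 * ∑ c, ‖(θ - θ') c‖ ^ 2) := Real.sqrt_le_sqrt h1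
        _ = ‖x‖ * Real.sqrt (∑ c, ‖(θ - θ') c‖ ^ 2) := by
            rw [Real.sqrt_mul (sq_nonneg _), Real.sqrt_sq (norm_nonneg _)]
        _ = ‖x‖ * ‖θ - θ'‖ := by rw [← hnorm]
    have hfinal : ‖x‖ * ‖θ - θ'‖ ≤ R * Real.sqrt (2 * (1 - α)) * ‖θ - θ'‖ := by
      have hx' : ‖x‖ ≤ R * Real.sqrt (2 * (1 - α)) := by nlinarith [norm_nonneg x]
      exact mul_le_mul_of_nonneg_right hx' (norm_nonneg _)
    calc ∑ c, |h θ c - h θ' c|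
        = (∑ c, ε c * h θ c) - ∑ c, ε c * h θ' c := habs
      _ ≤ |(∑ c, ε c * h θ c) - ∑ c, ε c * h θ' c| := le_abs_self _
      _ ≤ Real.sqrt (∑ c, bb c ^ 2) := hkey
      _ ≤ ‖x‖ * ‖θ - θ'‖ := hbb2
      _ ≤ _ := hfinal
end

section
/- Let 0 < ε < Γ. Set C = √(Γ+ε) − 1 and α = ε/(C+1)² = ε/(Γ+ε). Let x be uniformly distributed on [−√3, √3], and let (x,y) be drawn so that with probability α, y = C·x, and with probability 1−α, y = −x; define 𝓡(θ) = E[(y − θ·x)²]. Then α ∈ (0,1), the global minimizer θ⋆ = αC − (1−α) satisfies 𝓡(θ⋆) ≤ ε, while the specialist parameter θ̄₁ = C (the minimizer of the risk restricted to the first mixture component) satisfies 𝓡(θ̄₁) = Γ ≥ Γ. -/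
open MeasureTheory

lemma μ_sq_integral :
    ∫ x, x ^ 2 ∂((ENNReal.ofReal (2 * Real.sqrt 3))⁻¹ •
      volume.restrict (Set.Icc (-Real.sqrt 3) (Real.sqrt 3))) = 1 := by
  have h3 : (0:ℝ) < 2 * Real.sqrt 3 := by positivity
  rw [integral_smul_measure, ENNReal.toReal_inv, ENNReal.toReal_ofReal h3.le]
  have hle : -Real.sqrt 3 ≤ Real.sqrt 3 := by
    have := Real.sqrt_nonneg 3; linarith
  have hIcc : ∫ x in Set.Icc (-Real.sqrt 3) (Real.sqrt 3), x ^ 2 = 2 * Real.sqrt 3 := by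
    rw [MeasureTheory.integral_Icc_eq_integral_Ioc,
      ← intervalIntegral.integral_of_le hle, integral_pow]
    have h : Real.sqrt 3 ^ 2 = 3 := Real.sq_sqrt (by norm_num)
    have h' : Real.sqrt 3 ^ 3 = 3 * Real.sqrt 3 := by
      rw [pow_succ, h]
    norm_num [h']
    linear_combination (1/3 : ℝ) * h'
  rw [hIcc, smul_eq_mul, inv_mul_cancel₀ h3.ne']

lemma μ_mul_integral (c : ℝ) :
    ∫ x, (c * x) ^ 2 ∂((ENNReal.ofReal (2 * Real.sqrt 3))⁻¹ •
      volume.restrict (Set.Icc (-Real.sqrt 3) (Real.sqrt 3))) = c ^ 2 := by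
  simp_rw [mul_pow]
  rw [MeasureTheory.integral_const_mul, μ_sq_integral, mul_one]

/-- The overspecialization construction: with `C = √(Γ+ε) - 1` and `α = ε/(Γ+ε)`,
the global minimizer has risk at most `ε`, while the specialist `θ̄₁ = C` for the
first mixture component has full-population risk exactly `Γ`. -/
theorem overspecialization_instance (ε Γ : ℝ) (hε : 0 < ε) (hεΓ : ε < Γ)
    (Cs α : ℝ) (hCs : Cs = Real.sqrt (Γ + ε) - 1) (hαdef : α = ε / (Γ + ε))
    (μ : Measure ℝ)
    (hμ : μ = (ENNReal.ofReal (2 * Real.sqrt 3))⁻¹ •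
      volume.restrict (Set.Icc (-Real.sqrt 3) (Real.sqrt 3)))
    (P : Measure (ℝ × ℝ))
    (hP : P = ENNReal.ofReal α • μ.map (fun x => (x, Cs * x))
            + ENNReal.ofReal (1 - α) • μ.map (fun x => (x, -x)))
    (𝓡 : ℝ → ℝ) (h𝓡 : ∀ θ, 𝓡 θ = ∫ z, (z.2 - θ * z.1) ^ 2 ∂P) :
    (0 < α ∧ α < 1) ∧
    (∀ θ, 𝓡 (α * Cs - (1 - α)) ≤ 𝓡 θ) ∧
    𝓡 (α * Cs - (1 - α)) ≤ ε ∧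
    𝓡 Cs = Γ := by
  have hΓε : (0:ℝ) < Γ + ε := by linarith
  have hα0 : 0 < α := by rw [hαdef]; positivity
  have hα1 : α < 1 := by rw [hαdef, div_lt_one hΓε]; linarith
  -- integrability and pushforward computations
  have hintμ : ∀ h : ℝ → ℝ, Continuous h → Integrable h μ := by
    intro h hc
    rw [hμ]
    exact (hc.integrableOn_Icc).smul_measure (by simp)
  have hmap : ∀ (θ : ℝ) (g : ℝ → ℝ), Continuous g →
      ∫ z, (z.2 - θ * z.1) ^ 2 ∂(μ.map (fun x => (x, g x))) =
        ∫ x, (g x - θ * x) ^ 2 ∂μ := by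
    intro θ g hg
    rw [integral_map (φ := fun x => (x, g x)) (f := fun z : ℝ × ℝ => (z.2 - θ * z.1) ^ 2) (by fun_prop)
      ((continuous_snd.sub (continuous_const.mul continuous_fst)).pow 2).aestronglyMeasurable]
  have hintmap : ∀ (θ : ℝ) (g : ℝ → ℝ), Continuous g →
      Integrable (fun z : ℝ × ℝ => (z.2 - θ * z.1) ^ 2) (μ.map (fun x => (x, g x))) := by
    intro θ g hg
    rw [integrable_map_measure (f := fun x => (x, g x)) (g := fun z : ℝ × ℝ => (z.2 - θ * z.1) ^ 2)
      ((continuous_snd.sub (continuous_const.mul continuous_fst)).pow 2).aestronglyMeasurable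
      (by fun_prop)]
    exact hintμ _ (by fun_prop)
  have key : ∀ θ, 𝓡 θ = α * (Cs - θ) ^ 2 + (1 - α) * (1 + θ) ^ 2 := by
    intro θ
    rw [h𝓡, hP, integral_add_measure
        ((hintmap θ _ (by fun_prop)).smul_measure (by simp))
        ((hintmap θ _ (by fun_prop)).smul_measure (by simp)),
      integral_smul_measure, integral_smul_measure,
      ENNReal.toReal_ofReal hα0.le, ENNReal.toReal_ofReal (by linarith),
      hmap θ _ (by fun_prop), hmap θ _ (by fun_prop)]
    have h1 : ∫ x, (Cs * x - θ * x) ^ 2 ∂μ = (Cs - θ) ^ 2 := by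
      have : (fun x : ℝ => (Cs * x - θ * x) ^ 2) = fun x => ((Cs - θ) * x) ^ 2 := by
        funext x; ring
      rw [this, hμ, μ_mul_integral]
    have h2 : ∫ x, (-x - θ * x) ^ 2 ∂μ = (1 + θ) ^ 2 := by
      have : (fun x : ℝ => (-x - θ * x) ^ 2) = fun x => ((-(1 + θ)) * x) ^ 2 := by
        funext x; ring
      rw [this, hμ, μ_mul_integral, neg_pow]
      norm_num
    rw [h1, h2, smul_eq_mul, smul_eq_mul]
    try ring
  have hCs1 : Cs + 1 = Real.sqrt (Γ + ε) := by rw [hCs]; ring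
  have hCs2 : (Cs + 1) ^ 2 = Γ + ε := by rw [hCs1, Real.sq_sqrt hΓε.le]
  have hαΓ : α * (Γ + ε) = ε := by rw [hαdef]; field_simp
  refine ⟨⟨hα0, hα1⟩, ?_, ?_, ?_⟩
  · intro θ
    rw [key, key]
    nlinarith [sq_nonneg (θ - (α * Cs - (1 - α)))]
  · rw [key]
    have h1 : α * (Cs - (α * Cs - (1 - α))) ^ 2 + (1 - α) * (1 + (α * Cs - (1 - α))) ^ 2
        = α * (1 - α) * (Cs + 1) ^ 2 := by ring
    rw [h1, hCs2]
    nlinarith [hαΓ, hα0, hα1, hε]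
  · rw [key]
    linear_combination (1 - α) * hCs2 - hαΓ
end
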